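/- Let F be holomorphic on a neighborhood of a point z with F^k(z) = z, and suppose there exist ρ > 0 and a branch G of F^{-k} fixing z, defined on B(z, ρ), such that some iterate G^n maps B(z, ρ) into B(z, ρ/2). Then |(F^k)'(z)| > 1, i.e. z is a repelling periodic point of F. -/

import Mathlib

open Metric

/-- Schwarz-lemma argument of Corollary 7.2: a contracting inverse branch forces the
periodic point to be repelling. -/
theorem stmt_10 (F G : ℂ → ℂ) (z : ℂ) (k n : ℕ) (hk : 1 ≤ k) (hn : 1 ≤ n)
    (ρ : ℝ) (hρ : 0 < ρ)
    (hFanal : ∀ j < k, AnalyticAt ℂ F (F^[j] z))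
    (hfix : F^[k] z = z)
    (hGdiff : DifferentiableOn ℂ G (ball z ρ))
    (hGz : G z = z)
    (hbranch : ∀ w ∈ ball z ρ, F^[k] (G w) = w)
    (hGmaps : Set.MapsTo G (ball z ρ) (ball z ρ))
    (hGn : Set.MapsTo (G^[n]) (ball z ρ) (ball z (ρ / 2))) :
    1 < ‖deriv (F^[k]) z‖ := by
  have hzball : z ∈ ball z ρ := mem_ball_self hρ
  have hGat : DifferentiableAt ℂ G z :=
    (hGdiff z hzball).differentiableAt (isOpen_ball.mem_nhds hzball)
  -- iterates of G fix z
  have hGiterz : ∀ m, G^[m] z = z := by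
    intro m; induction m with
    | zero => rfl
    | succ m ih => rw [Function.iterate_succ_apply', ih, hGz]
  -- derivative of iterates of G
  have hGiter : ∀ m, DifferentiableAt ℂ (G^[m]) z ∧ deriv (G^[m]) z = (deriv G z) ^ m := by
    intro m; induction m with
    | zero => simp
    | succ m ih =>
      have h1 : DifferentiableAt ℂ G (G^[m] z) := by rwa [hGiterz m]
      refine ⟨?_, ?_⟩
      · rw [Function.iterate_succ']; exact DifferentiableAt.comp z h1 ih.1
      · rw [Function.iterate_succ', deriv_comp z h1 ih.1, hGiterz m, ih.2]; ring
  -- iterates map ball to ball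
  have hGmapsIter : ∀ m, Set.MapsTo (G^[m]) (ball z ρ) (ball z ρ) := by
    intro m; induction m with
    | zero => simpa using Set.mapsTo_id _
    | succ m ih =>
      rw [Function.iterate_succ']
      exact hGmaps.comp ih
  -- G^[n] differentiable on ball
  have hGndiff : ∀ m, DifferentiableOn ℂ (G^[m]) (ball z ρ) := by
    intro m; induction m with
    | zero => simpa using differentiableOn_id
    | succ m ih =>
      rw [Function.iterate_succ']
      exact hGdiff.comp ih (hGmapsIter m)
  -- Schwarz lemma: |(G^n)'(z)| ≤ 1/2
  have hhalf : ‖deriv (G^[n]) z‖ ≤ (ρ / 2) / ρ := by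
    have := Complex.norm_deriv_le_div_of_mapsTo_ball (hGndiff n)
      (by rw [hGiterz n]; exact hGn.mono_right ball_subset_closedBall) hρ
    exact this
  have hhalf' : ‖deriv G z‖ ^ n ≤ 1 / 2 := by
    rw [(hGiter n).2, norm_pow] at hhalf
    calc ‖deriv G z‖ ^ n ≤ (ρ / 2) / ρ := hhalf
    _ = 1 / 2 := by field_simp
  have hGlt : ‖deriv G z‖ < 1 := by
    by_contra h
    push_neg at h
    have : (1:ℝ) ≤ ‖deriv G z‖ ^ n := one_le_pow₀ h
    linarith
  -- F^[k] differentiable at z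
  have hFk : ∀ j ≤ k, DifferentiableAt ℂ (F^[j]) z := by
    intro j hj; induction j with
    | zero => simp
    | succ j ih =>
      rw [Function.iterate_succ']
      exact DifferentiableAt.comp z ((hFanal j hj).differentiableAt)
        (ih (Nat.le_of_succ_le hj))
  have hFkz : DifferentiableAt ℂ (F^[k]) z := hFk k le_rfl
  -- chain rule: deriv F^[k] z * deriv G z = 1
  have hchain : deriv (F^[k]) z * deriv G z = 1 := by
    have heq : (F^[k] ∘ G) =ᶠ[nhds z] id := by
      filter_upwards [isOpen_ball.mem_nhds hzball] with w hw
      exact hbranch w hw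
    have hd : deriv (F^[k] ∘ G) z = deriv (id : ℂ → ℂ) z := heq.deriv_eq
    rw [deriv_comp z (by rwa [hGz]) hGat, hGz, deriv_id] at hd
    exact hd
  -- conclude
  have habs : ‖deriv (F^[k]) z‖ * ‖deriv G z‖ = 1 := by
    rw [← norm_mul, hchain, norm_one]
  have hpos : 0 < ‖deriv G z‖ := by
    rcases eq_or_lt_of_le (norm_nonneg (deriv G z)) with h | h
    · rw [← h, mul_zero] at habs; norm_num at habs
    · exact h
  have : ‖deriv (F^[k]) z‖ = 1 / ‖deriv G z‖ := by
    field_simp at habs ⊢; linarith [habs]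
  rw [this]
  rw [lt_div_iff₀ hpos, one_mul]
  exact hGlt
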